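/- In the bond percolation model on the Cayley graph of a finitely generated group G with finite symmetric generating set S, the following holds: for every configuration ω ∈ Ω, every finite Λ ⊆ G, and every partition of Λ into pairwise disjoint finite sets Λ₁, …, Λ_k with ∪_{i=1}^k Λ_i = Λ, one has |F_ω(Λ)(m) − Σ_{i=1}^k F_ω(Λ_i)(m)| ≤ 2|S| Σ_{i=1}^k |∂¹(Λ_i)| for all m ∈ ℝ. -/

import Mathlib

open Set

/-- One step of an active path within `Λ`: `a, c ∈ Λ` are adjacent in the Cayley graph
(`c a⁻¹ ∈ S`) and the edge `[a,c]` is active in the configuration `ω`. -/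
def percStep {G : Type*} [Group G] (S : Finset G) (ω : G → G → Bool) (Λ : Set G)
    (a c : G) : Prop :=
  a ∈ Λ ∧ c ∈ Λ ∧ c * a⁻¹ ∈ S ∧ ω a (c * a⁻¹) = true ∧ ω c (a * c⁻¹) = true

/-- The cluster `C_x^Λ(ω)` of `x` in the configuration `ω`, via active paths with all
vertices in `Λ`. -/
def percCluster {G : Type*} [Group G] (S : Finset G) (ω : G → G → Bool) (Λ : Set G)
    (x : G) : Set G :=
  {y | Relation.ReflTransGen (percStep S ω Λ) x y}

/-- `F_ω(Λ)(m)`: the number of clusters in `Λ` of size at most `m`. -/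
noncomputable def Fdist {G : Type*} [Group G] (S : Finset G) (ω : G → G → Bool)
    (Λ : Set G) (m : ℝ) : ℕ :=
  Set.ncard {c : Set G | (∃ x ∈ Λ, c = percCluster S ω Λ x) ∧ (c.ncard : ℝ) ≤ m}

/-- The `1`-boundary `∂¹(Λ)` with respect to the word metric of `S`. -/
def boundary1 {G : Type*} [Group G] (S : Finset G) (Λ : Set G) : Set G :=
  {x | x ∈ Λ ∧ ∃ s ∈ S, s * x ∉ Λ} ∪ {x | x ∉ Λ ∧ ∃ s ∈ S, s * x ∈ Λ}

section Aux

variable {G : Type*} [Group G] {S : Finset G} {ω : G → G → Bool} {Λ Λ' : Set G}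

lemma percStep_symm (hsym : ∀ s ∈ S, s⁻¹ ∈ S) : Symmetric (percStep S ω Λ) := by
  rintro a c ⟨ha, hc, hs, h1, h2⟩
  refine ⟨hc, ha, ?_, h2, h1⟩
  have := hsym _ hs
  simpa [mul_inv_rev] using this

lemma mem_percCluster_self (x : G) : x ∈ percCluster S ω Λ x :=
  Relation.ReflTransGen.refl

lemma percCluster_subset {x : G} (hx : x ∈ Λ) : percCluster S ω Λ x ⊆ Λ := by
  intro y hy
  induction hy with
  | refl => exact hx
  | tail _ h _ => exact h.2.1

lemma percCluster_mono (h : Λ' ⊆ Λ) (x : G) :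
    percCluster S ω Λ' x ⊆ percCluster S ω Λ x := by
  intro y hy
  exact Relation.ReflTransGen.mono (r := percStep S ω Λ') (p := percStep S ω Λ)
    (by intro a b hab; obtain ⟨ha, hb, hs, h1, h2⟩ := hab; exact ⟨h ha, h hb, hs, h1, h2⟩) x y hy

lemma percCluster_eq_of_mem (hsym : ∀ s ∈ S, s⁻¹ ∈ S) {x y : G}
    (hy : y ∈ percCluster S ω Λ x) :
    percCluster S ω Λ x = percCluster S ω Λ y := by
  have hsymm : Symmetric (Relation.ReflTransGen (percStep S ω Λ)) := by
    haveI : Std.Symm (percStep S ω Λ) := ⟨fun a b h => percStep_symm (Λ := Λ) (ω := ω) hsym h⟩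
    intro a b h; exact Std.Symm.symm a b h
  ext z
  constructor
  · intro hz
    exact Relation.ReflTransGen.trans (hsymm hy) hz
  · intro hz
    exact Relation.ReflTransGen.trans hy hz

lemma percCluster_eq_of_common (hsym : ∀ s ∈ S, s⁻¹ ∈ S) {x y z : G}
    (hzx : z ∈ percCluster S ω Λ x) (hzy : z ∈ percCluster S ω Λ y) :
    percCluster S ω Λ x = percCluster S ω Λ y := by
  rw [percCluster_eq_of_mem hsym hzx, percCluster_eq_of_mem hsym hzy]

/-- Key lemma: if the inside-`Λ'` cluster of `x` never reaches the inner boundary of `Λ'`,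
then the cluster of `x` within the larger set `Λ` is the same. -/
lemma percCluster_eq_of_interior (hΛ' : Λ' ⊆ Λ) {x : G} (hx : x ∈ Λ')
    (H : ∀ y ∈ percCluster S ω Λ' x, ∀ s ∈ S, s * y ∈ Λ') :
    percCluster S ω Λ x = percCluster S ω Λ' x := by
  refine Set.Subset.antisymm ?_ (percCluster_mono hΛ' x)
  intro z hz
  induction hz with
  | refl => exact mem_percCluster_self x
  | @tail b c hab hbc ih =>
    obtain ⟨hbΛ, hcΛ, hs, h1, h2⟩ := hbc
    have hbΛ' : b ∈ Λ' := percCluster_subset hx ih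
    have hcΛ' : c ∈ Λ' := by
      have := H b ih _ hs
      simpa [inv_mul_cancel_right] using this
    exact Relation.ReflTransGen.tail ih ⟨hbΛ', hcΛ', hs, h1, h2⟩

lemma ncard_iUnion_eq_sum {α ι : Type*} [Fintype ι] (f : ι → Set α)
    (hfin : ∀ i, (f i).Finite)
    (hdis : ∀ i j, i ≠ j → Disjoint (f i) (f j)) :
    (⋃ i, f i).ncard = ∑ i, (f i).ncard := by
  classical
  have h1 : (⋃ i, f i) = ↑(Finset.univ.biUnion fun i => (hfin i).toFinset) := by
    ext z
    simp [Set.mem_iUnion]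
  rw [h1, Set.ncard_coe_finset, Finset.card_biUnion]
  · refine Finset.sum_congr rfl fun i _ => ?_
    rw [← Set.ncard_coe_finset]
    simp
  · intro i _ j _ hij
    rw [Function.onFun, Set.Finite.disjoint_toFinset]
    exact hdis i j hij

end Aux

lemma boundary1_finite {G : Type*} [Group G] (S : Finset G) {Λ' : Set G}
    (h : Λ'.Finite) : (boundary1 S Λ').Finite := by
  refine Set.Finite.union (h.subset fun x hx => hx.1) ?_
  have hsub : {x | x ∉ Λ' ∧ ∃ s ∈ S, s * x ∈ Λ'} ⊆
      ⋃ s ∈ (S : Set G), (fun y => s⁻¹ * y) '' Λ' := by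
    rintro x ⟨-, s, hs, hsx⟩
    exact Set.mem_biUnion hs ⟨s * x, hsx, by group⟩
  exact (Set.Finite.biUnion S.finite_toSet fun s _ => h.image _).subset hsub

lemma inner_le_boundary1 {G : Type*} [Group G] (S : Finset G) {Λ' : Set G}
    (h : Λ'.Finite) :
    ({y | y ∈ Λ' ∧ ∃ s ∈ S, s * y ∉ Λ'}.ncard : ℝ) ≤
      2 * (S.card : ℝ) * ((boundary1 S Λ').ncard : ℝ) := by
  rcases Finset.eq_empty_or_nonempty S with hS | hS
  · have he : {y | y ∈ Λ' ∧ ∃ s ∈ S, s * y ∉ Λ'} = ∅ :=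
      Set.eq_empty_of_forall_notMem (by rintro x ⟨-, s, hs, -⟩; simp [hS] at hs)
    rw [he]
    simp only [Set.ncard_empty, Nat.cast_zero]
    positivity
  · have h1 : {y | y ∈ Λ' ∧ ∃ s ∈ S, s * y ∉ Λ'}.ncard ≤ (boundary1 S Λ').ncard :=
      Set.ncard_le_ncard (fun x hx => Or.inl hx) (boundary1_finite S h)
    have h2 : (1 : ℝ) ≤ 2 * (S.card : ℝ) := by
      have : (1 : ℝ) ≤ (S.card : ℝ) := by
        exact_mod_cast Nat.one_le_iff_ne_zero.2 (Finset.card_ne_zero_of_mem hS.choose_spec)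
      linarith
    have h3 : ({y | y ∈ Λ' ∧ ∃ s ∈ S, s * y ∉ Λ'}.ncard : ℝ) ≤ ((boundary1 S Λ').ncard : ℝ) := by
      exact_mod_cast h1
    nlinarith [Nat.cast_nonneg (α := ℝ) (boundary1 S Λ').ncard, h3]


set_option maxHeartbeats 1600000 in
/-- Almost additivity of the cluster counting functions `F_ω(Λ)` (Lemma 8.3). -/
theorem stmt_14 {G : Type*} [Group G] (S : Finset G)
    (hsym : ∀ s ∈ S, s⁻¹ ∈ S) (hgen : Subgroup.closure (S : Set G) = ⊤)
    (ω : G → G → Bool) (Λ : Set G) (hΛ : Λ.Finite)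
    (k : ℕ) (Λi : Fin k → Set G) (hfin : ∀ i, (Λi i).Finite)
    (hdisj : ∀ i j, i ≠ j → Disjoint (Λi i) (Λi j)) (hunion : (⋃ i, Λi i) = Λ) :
    ∀ m : ℝ, |(Fdist S ω Λ m : ℝ) - ∑ i, (Fdist S ω (Λi i) m : ℝ)| ≤
      2 * (S.card : ℝ) * ∑ i, ((boundary1 S (Λi i)).ncard : ℝ) := by
  classical
  intro m
  have hΛsub : ∀ i, Λi i ⊆ Λ := fun i => hunion ▸ Set.subset_iUnion Λi i
  -- inner boundaries
  set inn : Fin k → Set G := fun i => {y | y ∈ Λi i ∧ ∃ s ∈ S, s * y ∉ Λi i} with hinn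
  set D : Set G := ⋃ i, inn i with hD
  have hinnsub : ∀ i, inn i ⊆ Λi i := fun i y hy => hy.1
  have hinnfin : ∀ i, (inn i).Finite := fun i => (hfin i).subset (hinnsub i)
  have hDfin : D.Finite := Set.finite_iUnion hinnfin
  -- cluster families
  set A : Set (Set G) :=
    {c : Set G | (∃ x ∈ Λ, c = percCluster S ω Λ x) ∧ (c.ncard : ℝ) ≤ m} with hA
  set B : Fin k → Set (Set G) := fun i =>
    {c : Set G | (∃ x ∈ Λi i, c = percCluster S ω (Λi i) x) ∧ (c.ncard : ℝ) ≤ m} with hB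
  have hFA : Fdist S ω Λ m = A.ncard := rfl
  have hFB : ∀ i, Fdist S ω (Λi i) m = (B i).ncard := fun i => rfl
  have hAfin : A.Finite := by
    refine hΛ.finite_subsets.subset ?_
    rintro c ⟨⟨x, hx, rfl⟩, -⟩
    exact percCluster_subset hx
  have hBfin : ∀ i, (B i).Finite := by
    intro i
    refine (hfin i).finite_subsets.subset ?_
    rintro c ⟨⟨x, hx, rfl⟩, -⟩
    exact percCluster_subset hx
  -- elements of B i are nonempty subsets of Λi i
  have hBsub : ∀ i, ∀ c ∈ B i, c ⊆ Λi i ∧ c.Nonempty := by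
    rintro i c ⟨⟨x, hx, rfl⟩, -⟩
    exact ⟨percCluster_subset hx, ⟨x, mem_percCluster_self x⟩⟩
  have hBdisj : ∀ i j, i ≠ j → Disjoint (B i) (B j) := by
    intro i j hij
    rw [Set.disjoint_left]
    intro c hci hcj
    obtain ⟨hsubi, ⟨z, hz⟩⟩ := hBsub i c hci
    obtain ⟨hsubj, -⟩ := hBsub j c hcj
    exact (hdisj i j hij).le_bot ⟨hsubi hz, hsubj hz⟩ |>.elim
  -- good / bad split
  set Agood : Set (Set G) := {c ∈ A | c ∩ D = ∅} with hAgood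
  set Abad : Set (Set G) := {c ∈ A | (c ∩ D).Nonempty} with hAbad
  set Bgood : Fin k → Set (Set G) := fun i => {c ∈ B i | c ∩ D = ∅} with hBgood
  set Bbad : Fin k → Set (Set G) := fun i => {c ∈ B i | (c ∩ D).Nonempty} with hBbad
  have hsplitA : A.ncard = Agood.ncard + Abad.ncard := by
    have hu : A = Agood ∪ Abad := by
      ext c
      constructor
      · intro hc
        rcases Set.eq_empty_or_nonempty (c ∩ D) with h | h
        · exact Or.inl ⟨hc, h⟩
        · exact Or.inr ⟨hc, h⟩
      · rintro (⟨hc, -⟩ | ⟨hc, -⟩) <;> exact hc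
    have hd : Disjoint Agood Abad := by
      rw [Set.disjoint_left]
      rintro c ⟨-, he⟩ ⟨-, hne⟩
      rw [he] at hne
      exact hne.ne_empty rfl
    rw [hu]
    exact Set.ncard_union_eq hd (hAfin.subset fun c hc => hc.1)
      (hAfin.subset fun c hc => hc.1)
  have hsplitB : ∀ i, (B i).ncard = (Bgood i).ncard + (Bbad i).ncard := by
    intro i
    have hu : B i = Bgood i ∪ Bbad i := by
      ext c
      constructor
      · intro hc
        rcases Set.eq_empty_or_nonempty (c ∩ D) with h | h
        · exact Or.inl ⟨hc, h⟩
        · exact Or.inr ⟨hc, h⟩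
      · rintro (⟨hc, -⟩ | ⟨hc, -⟩) <;> exact hc
    have hd : Disjoint (Bgood i) (Bbad i) := by
      rw [Set.disjoint_left]
      rintro c ⟨-, he⟩ ⟨-, hne⟩
      rw [he] at hne
      exact hne.ne_empty rfl
    rw [hu]
    exact Set.ncard_union_eq hd ((hBfin i).subset fun c hc => hc.1)
      ((hBfin i).subset fun c hc => hc.1)
  -- the key identification of good clusters
  have hkey : ∀ i, ∀ x ∈ Λi i, percCluster S ω (Λi i) x ∩ D = ∅ →
      percCluster S ω Λ x = percCluster S ω (Λi i) x := by
    intro i x hx hcap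
    refine percCluster_eq_of_interior (hΛsub i) hx ?_
    intro y hy s hs
    by_contra hsy
    have hyΛ : y ∈ Λi i := percCluster_subset hx hy
    have : y ∈ percCluster S ω (Λi i) x ∩ D :=
      ⟨hy, Set.mem_iUnion.2 ⟨i, hyΛ, s, hs, hsy⟩⟩
    rw [hcap] at this
    exact this
  have hGoodEq : Agood = ⋃ i, Bgood i := by
    ext c
    constructor
    · rintro ⟨⟨⟨x, hx, rfl⟩, hm⟩, hcap⟩
      have hx' : x ∈ ⋃ i, Λi i := hunion ▸ hx
      obtain ⟨i, hxi⟩ := Set.mem_iUnion.1 hx'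
      have hsub : percCluster S ω (Λi i) x ∩ D = ∅ := by
        have h1 : percCluster S ω (Λi i) x ⊆ percCluster S ω Λ x :=
          percCluster_mono (hΛsub i) x
        apply Set.eq_empty_of_subset_empty
        rw [← hcap]
        exact Set.inter_subset_inter_left D h1
      have heq := hkey i x hxi hsub
      refine Set.mem_iUnion.2 ⟨i, ⟨⟨x, hxi, heq⟩, ?_⟩, ?_⟩
      · exact hm
      · exact hcap
    · intro hc
      obtain ⟨i, ⟨⟨x, hx, rfl⟩, hm⟩, hcap⟩ := Set.mem_iUnion.1 hc
      have heq := hkey i x hx hcap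
      exact ⟨⟨⟨x, hΛsub i hx, heq.symm⟩, hm⟩, hcap⟩
  have hBgooddisj : ∀ i j, i ≠ j → Disjoint (Bgood i) (Bgood j) := fun i j hij =>
    (hBdisj i j hij).mono (fun c hc => hc.1) (fun c hc => hc.1)
  have hBbaddisj : ∀ i j, i ≠ j → Disjoint (Bbad i) (Bbad j) := fun i j hij =>
    (hBdisj i j hij).mono (fun c hc => hc.1) (fun c hc => hc.1)
  have hAgoodcard : Agood.ncard = ∑ i, (Bgood i).ncard := by
    rw [hGoodEq]
    exact ncard_iUnion_eq_sum _ (fun i => (hBfin i).subset fun c hc => hc.1) hBgooddisj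
  -- the choice of a boundary point in each bad cluster
  set f : Set G → G := fun c => if h : (c ∩ D).Nonempty then h.choose else 1 with hf
  have hfmem : ∀ c : Set G, (c ∩ D).Nonempty → f c ∈ c ∩ D := by
    intro c h
    rw [hf]
    simp only [dif_pos h]
    exact h.choose_spec
  -- bound on number of bad clusters of Λ
  have hAbadle : Abad.ncard ≤ D.ncard := by
    refine Set.ncard_le_ncard_of_injOn f (fun c hc => (hfmem c hc.2).2) ?_ hDfin
    rintro c₁ ⟨⟨⟨x₁, hx₁, rfl⟩, -⟩, h₁⟩ c₂ ⟨⟨⟨x₂, hx₂, rfl⟩, -⟩, h₂⟩ hfe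
    have hz₁ := hfmem _ h₁
    have hz₂ := hfmem _ h₂
    rw [hfe] at hz₁
    exact percCluster_eq_of_common hsym hz₁.1 hz₂.1
  -- bound on total number of bad clusters of the pieces
  have hBbadle : ∑ i, (Bbad i).ncard ≤ D.ncard := by
    rw [← ncard_iUnion_eq_sum _ (fun i => (hBfin i).subset fun c hc => hc.1) hBbaddisj]
    refine Set.ncard_le_ncard_of_injOn f ?_ ?_ hDfin
    · rintro c hc
      obtain ⟨i, -, hne⟩ := Set.mem_iUnion.1 hc
      exact (hfmem c hne).2
    · intro c₁ hc₁ c₂ hc₂ hfe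
      obtain ⟨i, hci, hne₁⟩ := Set.mem_iUnion.1 hc₁
      obtain ⟨j, hcj, hne₂⟩ := Set.mem_iUnion.1 hc₂
      have hz₁ := hfmem _ hne₁
      have hz₂ := hfmem _ hne₂
      rw [hfe] at hz₁
      -- the common point forces i = j
      have hij : i = j := by
        by_contra hij
        obtain ⟨hsubi, -⟩ := hBsub i c₁ hci
        obtain ⟨hsubj, -⟩ := hBsub j c₂ hcj
        exact (hdisj i j hij).le_bot ⟨hsubi hz₁.1, hsubj hz₂.1⟩
      subst hij
      obtain ⟨⟨x₁, hx₁, rfl⟩, -⟩ := hci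
      obtain ⟨⟨x₂, hx₂, rfl⟩, -⟩ := hcj
      exact percCluster_eq_of_common hsym hz₁.1 hz₂.1
  -- bound on |D|
  have hDcard : D.ncard ≤ ∑ i, (inn i).ncard := by
    rw [hD, ncard_iUnion_eq_sum _ hinnfin
      (fun i j hij => ((hdisj i j hij).mono (hinnsub i) (hinnsub j)))]
  -- per-piece comparison with the stated boundary
  have hinnle : ∀ i, ((inn i).ncard : ℝ) ≤ 2 * (S.card : ℝ) * ((boundary1 S (Λi i)).ncard : ℝ) :=
    fun i => inner_le_boundary1 S (hfin i)
  -- put everything together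
  have hfinal : (D.ncard : ℝ) ≤ 2 * (S.card : ℝ) * ∑ i, ((boundary1 S (Λi i)).ncard : ℝ) := by
    calc (D.ncard : ℝ) ≤ ∑ i, ((inn i).ncard : ℝ) := by exact_mod_cast hDcard
      _ ≤ ∑ i, 2 * (S.card : ℝ) * ((boundary1 S (Λi i)).ncard : ℝ) :=
          Finset.sum_le_sum fun i _ => hinnle i
      _ = 2 * (S.card : ℝ) * ∑ i, ((boundary1 S (Λi i)).ncard : ℝ) := by
          rw [Finset.mul_sum]
  have e1 : (Fdist S ω Λ m : ℝ) = (Agood.ncard : ℝ) + (Abad.ncard : ℝ) := by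
    rw [hFA, hsplitA]; push_cast; ring
  have e2 : (∑ i, (Fdist S ω (Λi i) m : ℝ)) =
      (Agood.ncard : ℝ) + ∑ i, ((Bbad i).ncard : ℝ) := by
    have : ∀ i, (Fdist S ω (Λi i) m : ℝ) = ((Bgood i).ncard : ℝ) + ((Bbad i).ncard : ℝ) := by
      intro i
      rw [hFB i, hsplitB i]; push_cast; ring
    rw [Finset.sum_congr rfl fun i _ => this i, Finset.sum_add_distrib]
    congr 1
    rw [hAgoodcard]
    push_cast
    ring
  rw [e1, e2]
  have h4 : (Abad.ncard : ℝ) ≤ (D.ncard : ℝ) := by exact_mod_cast hAbadle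
  have h5 : (∑ i, ((Bbad i).ncard : ℝ)) ≤ (D.ncard : ℝ) := by
    exact_mod_cast (by exact_mod_cast hBbadle : (∑ i, ((Bbad i).ncard : ℝ)) ≤ (D.ncard : ℝ))
  have h6 : (0 : ℝ) ≤ (Abad.ncard : ℝ) := by positivity
  have h7 : (0 : ℝ) ≤ ∑ i, ((Bbad i).ncard : ℝ) :=
    Finset.sum_nonneg fun i _ => by positivity
  rw [abs_le]
  constructor <;> linarith
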